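/- If G is a connected cubic (3-regular) multigraph admitting an interval t-coloring, then t ≤ |V(G)| + 1. -/

import Mathlib

/-- A finite loopless multigraph: an edge-indexed family of unordered pairs of
vertices, none of which is a loop. -/
structure Multigraph (V E : Type*) where
  /-- the endpoints of an edge -/
  ends : E → Sym2 V
  loopless : ∀ e, ¬ (ends e).IsDiag

namespace Multigraph

variable {V E : Type*} (G : Multigraph V E)

/-- `v` is an endpoint of `e`. -/
def Inc (v : V) (e : E) : Prop := v ∈ G.ends e

/-- The degree of a vertex: the number of edges incident to it. -/
noncomputable def degree (v : V) : ℕ := Nat.card {e : E // G.Inc v e}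

/-- The maximum degree `Δ(G)`. -/
noncomputable def maxDegree : ℕ := sSup (Set.range G.degree)

/-- Two vertices are adjacent if some edge joins them. -/
def Adj (a b : V) : Prop := ∃ e, G.ends e = s(a, b)

/-- `G` is connected. -/
def Connected : Prop := Nonempty V ∧ ∀ u w : V, Relation.ReflTransGen G.Adj u w

/-- `G` is 2-connected: it is connected and removing any single vertex leaves it
connected (any two vertices distinct from `v` are joined by a walk avoiding `v`). -/
def TwoConnected : Prop :=
  G.Connected ∧ ∀ v u w : V, u ≠ v → w ≠ v →
    Relation.ReflTransGen (fun a b => G.Adj a b ∧ a ≠ v ∧ b ≠ v) u w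

/-- An interval `t`-coloring of the multigraph `G`: a proper edge coloring with
colors `1,…,t`, each color used at least once, such that the colors on the edges
incident to every vertex form an interval of consecutive integers. -/
def IsIntervalColoring (t : ℕ) (c : E → ℕ) : Prop :=
  (∀ e₁ e₂ : E, e₁ ≠ e₂ → (∃ v, G.Inc v e₁ ∧ G.Inc v e₂) → c e₁ ≠ c e₂) ∧
  (∀ e, c e ∈ Set.Icc 1 t) ∧
  (∀ i ∈ Set.Icc 1 t, ∃ e, c e = i) ∧
  (∀ (v : V) (i j k : ℕ), (∃ e, G.Inc v e ∧ c e = i) → (∃ e, G.Inc v e ∧ c e = j) →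
    i ≤ k → k ≤ j → ∃ e, G.Inc v e ∧ c e = k)

/-- `G` has a cycle of length `n`: `n ≥ 2` distinct vertices and `n` distinct edges
arranged cyclically. -/
def HasCycleOfLength (n : ℕ) : Prop :=
  2 ≤ n ∧ ∃ (f : ZMod n → V) (g : ZMod n → E),
    Function.Injective f ∧ Function.Injective g ∧
    ∀ i : ZMod n, G.ends (g i) = s(f i, f (i + 1))

end Multigraph

open Finset

/-- If `G` is a connected cubic multigraph admitting an interval `t`-coloring, then
`t ≤ |V(G)| + 1`. -/
theorem stmt8 {V E : Type*} [Fintype V] [Fintype E] (G : Multigraph V E)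
    (hconn : G.Connected) (hcubic : ∀ v : V, G.degree v = 3)
    (t : ℕ) (c : E → ℕ) (h : G.IsIntervalColoring t c) :
    t ≤ Fintype.card V + 1 := by
  classical
  obtain ⟨hne, hwalk⟩ := hconn
  obtain ⟨hproper, hrange, hused, hint⟩ := h
  -- endpoints of an edge
  have hends : ∀ e : E, ∃ x y : V, x ≠ y ∧ (∀ v, G.Inc v e ↔ v = x ∨ v = y) := by
    intro e
    obtain ⟨x, y, hxy⟩ : ∃ x y, G.ends e = s(x, y) :=
      Sym2.inductionOn (G.ends e) fun x y => ⟨x, y, rfl⟩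
    refine ⟨x, y, ?_, fun v => ?_⟩
    · intro hxyeq
      exact G.loopless e (by rw [hxy]; exact Sym2.mk_isDiag_iff.2 hxyeq)
    · unfold Multigraph.Inc
      rw [hxy, Sym2.mem_iff]
  -- spectra are intervals of length 3
  have hS : ∀ v : V, ∃ m : ℕ, 1 ≤ m ∧ m + 2 ≤ t ∧
      (univ.filter fun e => G.Inc v e).image c = Finset.Icc m (m + 2) := by
    intro v
    have h3 : (univ.filter fun e => G.Inc v e).card = 3 := by
      have hd := hcubic v
      unfold Multigraph.degree at hd
      rwa [Nat.card_eq_fintype_card, Fintype.card_subtype] at hd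
    set I : Finset E := univ.filter fun e => G.Inc v e with hI
    have hinj : Set.InjOn c I := by
      intro e₁ h₁ e₂ h₂ hc
      by_contra hne'
      exact hproper e₁ e₂ hne' ⟨v, (mem_filter.1 h₁).2, (mem_filter.1 h₂).2⟩ hc
    have hcard : (I.image c).card = 3 := by
      rw [Finset.card_image_of_injOn hinj, h3]
    have hnonempty : (I.image c).Nonempty := by
      rw [← Finset.card_pos, hcard]; omega
    set S := I.image c with hSdef
    set m := S.min' hnonempty with hm
    set M := S.max' hnonempty with hM
    have hmS : m ∈ S := S.min'_mem hnonempty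
    have hMS : M ∈ S := S.max'_mem hnonempty
    have hexm : ∃ e, G.Inc v e ∧ c e = m := by
      obtain ⟨e, he, hce⟩ := Finset.mem_image.1 hmS
      exact ⟨e, (mem_filter.1 he).2, hce⟩
    have hexM : ∃ e, G.Inc v e ∧ c e = M := by
      obtain ⟨e, he, hce⟩ := Finset.mem_image.1 hMS
      exact ⟨e, (mem_filter.1 he).2, hce⟩
    have hSeq : S = Finset.Icc m M := by
      apply Finset.Subset.antisymm
      · intro x hx
        exact Finset.mem_Icc.2 ⟨S.min'_le x hx, S.le_max' x hx⟩
      · intro k hk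
        obtain ⟨hk1, hk2⟩ := Finset.mem_Icc.1 hk
        obtain ⟨e, he, hce⟩ := hint v m M k hexm hexM hk1 hk2
        exact Finset.mem_image.2 ⟨e, mem_filter.2 ⟨mem_univ e, he⟩, hce⟩
    have hcard' : M + 1 - m = 3 := by
      have := hcard
      rw [hSeq, Nat.card_Icc] at this
      exact this
    have hmM : m ≤ M := S.min'_le M hMS
    have hMm : M = m + 2 := by omega
    obtain ⟨e, _, hce⟩ := hexm
    have h1m : 1 ≤ m ∧ m ≤ t := by have := hrange e; rw [hce] at this; exact this
    obtain ⟨e', _, hce'⟩ := hexM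
    have hMt : M ≤ t := by have := hrange e'; rw [hce'] at this; exact this.2
    exact ⟨m, h1m.1, by omega, by rw [hSeq, hMm]⟩
  choose a ha1 ha2 haS using hS
  -- incidence → color in spectrum
  have hmem : ∀ (v : V) (e : E), G.Inc v e → a v ≤ c e ∧ c e ≤ a v + 2 := by
    intro v e he
    have : c e ∈ Finset.Icc (a v) (a v + 2) := by
      rw [← haS v]
      exact Finset.mem_image.2 ⟨e, mem_filter.2 ⟨mem_univ e, he⟩, rfl⟩
    exact Finset.mem_Icc.1 this
  have hmem' : ∀ (v : V) (k : ℕ), a v ≤ k → k ≤ a v + 2 → ∃ e, G.Inc v e ∧ c e = k := by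
    intro v k h1 h2
    have : k ∈ (univ.filter fun e => G.Inc v e).image c := by
      rw [haS v]; exact Finset.mem_Icc.2 ⟨h1, h2⟩
    obtain ⟨e, he, hce⟩ := Finset.mem_image.1 this
    exact ⟨e, (mem_filter.1 he).2, hce⟩
  -- evenness of V_i
  have hVeven : ∀ i : ℕ, Even ((univ.filter fun v => a v ≤ i ∧ i ≤ a v + 2).card) := by
    intro i
    have hrepr : (univ.filter fun v => a v ≤ i ∧ i ≤ a v + 2) =
        (univ.filter fun e => c e = i).biUnion (fun e => univ.filter fun v => G.Inc v e) := by
      apply Finset.Subset.antisymm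
      · intro v hv
        obtain ⟨-, h1, h2⟩ := mem_filter.1 hv
        obtain ⟨e, he, hce⟩ := hmem' v i h1 h2
        exact Finset.mem_biUnion.2 ⟨e, mem_filter.2 ⟨mem_univ e, hce⟩,
          mem_filter.2 ⟨mem_univ v, he⟩⟩
      · intro v hv
        obtain ⟨e, he, hv'⟩ := Finset.mem_biUnion.1 hv
        have hce := (mem_filter.1 he).2
        have hinc := (mem_filter.1 hv').2
        have := hmem v e hinc
        rw [hce] at this
        exact mem_filter.2 ⟨mem_univ v, this⟩
    rw [hrepr, Finset.card_biUnion]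
    · apply Finset.even_sum
      intro e he
      obtain ⟨x, y, hxy, hiff⟩ := hends e
      have : (univ.filter fun v => G.Inc v e) = {x, y} := by
        ext v
        simp [hiff v, Finset.mem_insert]
      rw [this, Finset.card_insert_of_notMem (by simp [hxy]), Finset.card_singleton]
      exact ⟨1, rfl⟩
    · intro e₁ h₁ e₂ h₂ hne'
      rw [Function.onFun, Finset.disjoint_left]
      intro v hv₁ hv₂
      exact hproper e₁ e₂ hne' ⟨v, (mem_filter.1 hv₁).2, (mem_filter.1 hv₂).2⟩
        (((mem_filter.1 h₁).2).trans ((mem_filter.1 h₂).2).symm)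
  -- evenness of F j = #{v | a v + 2 = j}
  have hsplit : ∀ i : ℕ, (univ.filter fun v => a v ≤ i ∧ i ≤ a v + 2).card =
      (univ.filter fun v => a v + 2 = i + 2).card +
      (univ.filter fun v => a v + 2 = i + 1).card +
      (univ.filter fun v => a v + 2 = i).card := by
    intro i
    rw [Finset.card_filter, Finset.card_filter, Finset.card_filter, Finset.card_filter,
      ← Finset.sum_add_distrib, ← Finset.sum_add_distrib]
    exact Finset.sum_congr rfl fun v _ => by split_ifs <;> omega
  have hF : ∀ j : ℕ, Even ((univ.filter fun v => a v + 2 = j).card) := by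
    intro j
    induction j using Nat.strong_induction_on with
    | _ j IH =>
      match j with
      | 0 => simp
      | 1 => simp
      | (i + 2) =>
        have h1 := IH (i + 1) (by omega)
        have h2 := IH i (by omega)
        have hV := hVeven i
        rw [hsplit i] at hV
        rw [Nat.even_iff] at *
        omega
  -- connectivity: boundary sets are nonempty
  have hbdry : ∀ i : ℕ, 1 ≤ i → i + 1 ≤ t →
      ∃ v, a v ≤ i ∧ i ≤ a v + 1 := by
    intro i hi1 hi2
    by_contra hcon
    push_neg at hcon
    have hgap : ∀ v, a v + 2 ≤ i ∨ i + 1 ≤ a v := by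
      intro v
      by_cases hv : a v ≤ i
      · exact Or.inl (by have := hcon v hv; omega)
      · exact Or.inr (by omega)
    have hstep : ∀ x y : V, G.Adj x y → i + 1 ≤ a x → i + 1 ≤ a y := by
      intro x y hadj hx
      obtain ⟨e, he⟩ := hadj
      have hincx : G.Inc x e := by unfold Multigraph.Inc; rw [he]; exact Sym2.mem_mk_left x y
      have hincy : G.Inc y e := by unfold Multigraph.Inc; rw [he]; exact Sym2.mem_mk_right x y
      have h1 := hmem x e hincx
      have h2 := hmem y e hincy
      rcases hgap y with hy | hy
      · omega
      · exact hy
    obtain ⟨e₂, hce₂⟩ := hused (i + 1) ⟨by omega, hi2⟩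
    obtain ⟨x₂, y₂, -, hiff₂⟩ := hends e₂
    have hincx₂ : G.Inc x₂ e₂ := (hiff₂ x₂).2 (Or.inl rfl)
    have hPx₂ : i + 1 ≤ a x₂ := by
      have := hmem x₂ e₂ hincx₂
      rw [hce₂] at this
      rcases hgap x₂ with hx | hx
      · omega
      · exact hx
    have hreach : ∀ u', Relation.ReflTransGen G.Adj x₂ u' → i + 1 ≤ a u' := by
      intro u' hw
      induction hw with
      | refl => exact hPx₂
      | tail hab hstep' ih => exact hstep _ _ hstep' ih
    obtain ⟨e₁, hce₁⟩ := hused i ⟨hi1, by omega⟩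
    obtain ⟨u, y₁, -, hiff₁⟩ := hends e₁
    have hincu : G.Inc u e₁ := (hiff₁ u).2 (Or.inl rfl)
    have hPu : a u ≤ i := by
      have := hmem u e₁ hincu
      rw [hce₁] at this
      exact this.1
    have := hreach u (hwalk x₂ u)
    omega
  -- boundary sets have even cardinality
  have hBsplit : ∀ i : ℕ, (univ.filter fun v => a v ≤ i ∧ i ≤ a v + 1).card =
      (univ.filter fun v => a v + 2 = i + 2).card +
      (univ.filter fun v => a v + 2 = i + 1).card := by
    intro i
    rw [Finset.card_filter, Finset.card_filter, Finset.card_filter,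
      ← Finset.sum_add_distrib]
    exact Finset.sum_congr rfl fun v _ => by split_ifs <;> omega
  have hB2 : ∀ i ∈ Finset.Icc 1 (t - 1),
      2 ≤ (univ.filter fun v => a v ≤ i ∧ i ≤ a v + 1).card := by
    intro i hi
    obtain ⟨hi1, hi2⟩ := Finset.mem_Icc.1 hi
    have ht1 : 1 ≤ t := by omega
    obtain ⟨v, hv1, hv2⟩ := hbdry i hi1 (by omega)
    have hpos : 0 < (univ.filter fun v => a v ≤ i ∧ i ≤ a v + 1).card :=
      Finset.card_pos.2 ⟨v, mem_filter.2 ⟨mem_univ v, hv1, hv2⟩⟩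
    have heven : Even ((univ.filter fun v => a v ≤ i ∧ i ≤ a v + 1).card) := by
      rw [hBsplit i]
      exact (hF (i + 2)).add (hF (i + 1))
    rw [Nat.even_iff] at heven
    omega
  -- sum the boundary cardinalities
  have hlow : 2 * (t - 1) ≤
      ∑ i ∈ Finset.Icc 1 (t - 1), (univ.filter fun v => a v ≤ i ∧ i ≤ a v + 1).card := by
    calc 2 * (t - 1) = ∑ _i ∈ Finset.Icc 1 (t - 1), 2 := by
          rw [Finset.sum_const, Nat.card_Icc]
          simp [Nat.mul_comm]
      _ ≤ _ := Finset.sum_le_sum hB2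
  have hhigh : ∑ i ∈ Finset.Icc 1 (t - 1),
      (univ.filter fun v => a v ≤ i ∧ i ≤ a v + 1).card ≤ 2 * Fintype.card V := by
    have hswap : ∑ i ∈ Finset.Icc 1 (t - 1),
        (univ.filter fun v => a v ≤ i ∧ i ≤ a v + 1).card
        = ∑ v : V, ((Finset.Icc 1 (t - 1)).filter fun i => a v ≤ i ∧ i ≤ a v + 1).card := by
      simp only [Finset.card_filter]
      rw [Finset.sum_comm]
    rw [hswap]
    calc ∑ v : V, ((Finset.Icc 1 (t - 1)).filter fun i => a v ≤ i ∧ i ≤ a v + 1).card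
        ≤ ∑ _v : V, 2 := by
          apply Finset.sum_le_sum
          intro v _
          calc ((Finset.Icc 1 (t - 1)).filter fun i => a v ≤ i ∧ i ≤ a v + 1).card
              ≤ (Finset.Icc (a v) (a v + 1)).card := by
                apply Finset.card_le_card
                intro i hi
                obtain ⟨-, h1, h2⟩ := mem_filter.1 hi
                exact Finset.mem_Icc.2 ⟨h1, h2⟩
            _ = 2 := by rw [Nat.card_Icc]; omega
      _ = 2 * Fintype.card V := by
          rw [Finset.sum_const, Finset.card_univ, smul_eq_mul, Nat.mul_comm]
    
  have hV1 : 1 ≤ Fintype.card V := @Fintype.card_pos V _ hne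
  omega
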